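/- Let m ≥ 1 be an integer. For every real r with 0 < r ≤ m, one has J_{m+1/2}(r) > J_{m+3/2}(r), where J_α is the Bessel function of the first kind defined by its power series. -/

import Mathlib

open Real

open Filter Topology Set

section BesselAux



lemma summable_pow_of_abs {c : ℕ → ℝ} (h : ∀ R : ℝ, 0 < R → Summable fun k => |c k| * R ^ k)
    (t : ℝ) : Summable fun k => c k * t ^ k := by
  refine Summable.of_norm (Summable.of_nonneg_of_le (fun k => norm_nonneg _)
    (fun k => ?_) (h (|t| + 1) (by positivity)))
  rw [norm_mul, norm_pow]
  have h1 : |t| ≤ |t| + 1 := by linarith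
  have : ‖t‖ ^ k ≤ (|t| + 1) ^ k := by
    exact pow_le_pow_left₀ (abs_nonneg t) h1 k
  calc ‖c k‖ * ‖t‖ ^ k ≤ ‖c k‖ * (|t| + 1) ^ k := by
        exact mul_le_mul_of_nonneg_left this (norm_nonneg _)
    _ = |c k| * (|t| + 1) ^ k := rfl

lemma hasDerivAt_tsum_pow {c : ℕ → ℝ} (h : ∀ R : ℝ, 0 < R → Summable fun k => |c k| * R ^ k)
    (t : ℝ) :
    HasDerivAt (fun x : ℝ => ∑' k, c k * x ^ k) (∑' k, c k * (k * t ^ (k - 1))) t := by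
  set R : ℝ := |t| + 1 with hR
  have hR1 : 1 ≤ R := by rw [hR]; linarith [abs_nonneg t]
  have hR0 : 0 < R := by linarith
  have hmem : t ∈ Metric.ball (0:ℝ) R := by
    rw [Metric.mem_ball, Real.dist_eq, sub_zero, hR]; linarith
  have hu : Summable fun k => |c k| * (2 * R) ^ k / R := (h (2 * R) (by linarith)).div_const R
  have hbound : ∀ (k : ℕ) (x : ℝ), x ∈ Metric.ball (0:ℝ) R →
      ‖c k * ((k : ℝ) * x ^ (k - 1))‖ ≤ |c k| * (2 * R) ^ k / R := by
    intro k x hx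
    have hxR : |x| ≤ R := by
      rw [Metric.mem_ball, Real.dist_eq, sub_zero] at hx; linarith
    have h1 : ‖c k * ((k : ℝ) * x ^ (k - 1))‖ = |c k| * ((k : ℝ) * |x| ^ (k - 1)) := by
      rw [norm_mul, norm_mul, norm_pow, Real.norm_natCast]; rfl
    rw [h1, div_eq_mul_inv, mul_assoc]
    refine mul_le_mul_of_nonneg_left ?_ (abs_nonneg _)
    rcases Nat.eq_zero_or_pos k with hk | hk
    · subst hk; simp; positivity
    have hk2 : (k : ℝ) ≤ 2 ^ k := by exact_mod_cast (Nat.lt_two_pow_self (n := k)).le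
    have key : (k : ℝ) * |x| ^ (k - 1) ≤ 2 ^ k * R ^ (k - 1) :=
      mul_le_mul hk2 (pow_le_pow_left₀ (abs_nonneg x) hxR _) (by positivity) (by positivity)
    refine key.trans ?_
    have hpow : R ^ (k - 1) ≤ R ^ k * R⁻¹ := by
      have : R ^ k = R ^ (k - 1) * R := by
        rw [← pow_succ, Nat.sub_add_cancel hk]
      rw [this, mul_assoc, mul_inv_cancel₀ (ne_of_gt hR0), mul_one]
    calc (2:ℝ) ^ k * R ^ (k - 1) ≤ 2 ^ k * (R ^ k * R⁻¹) := by
          exact mul_le_mul_of_nonneg_left hpow (by positivity)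
      _ = (2 * R) ^ k * R⁻¹ := by rw [mul_pow]; ring
  refine hasDerivAt_of_tendstoUniformlyOn (f := fun N x => ∑ k ∈ Finset.range N, c k * x ^ k)
    Metric.isOpen_ball (tendstoUniformlyOn_tsum_nat hu hbound) ?_ ?_ hmem
  · filter_upwards with n x _
    have : HasDerivAt (fun x : ℝ => ∑ k ∈ Finset.range n, c k * x ^ k)
        (∑ k ∈ Finset.range n, c k * ((k : ℝ) * x ^ (k - 1))) x := by
      refine HasDerivAt.fun_sum fun k _ => ?_
      simpa using (hasDerivAt_pow k x).const_mul (c k)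
    exact this
  · intro x _
    exact (summable_pow_of_abs h x).hasSum.tendsto_sum_nat


noncomputable def bc (ν : ℝ) (k : ℕ) : ℝ :=
  (-1) ^ k / ((Nat.factorial k : ℝ) * Real.Gamma ((k : ℝ) + ν + 1))

lemma gamma_arg_pos {ν : ℝ} (hν : 0 ≤ ν) (k : ℕ) : 0 < Real.Gamma ((k : ℝ) + ν + 1) := by
  apply Real.Gamma_pos_of_pos
  have := Nat.cast_nonneg (α := ℝ) k
  linarith

lemma bc_abs {ν : ℝ} (hν : 0 ≤ ν) (k : ℕ) :
    |bc ν k| = 1 / ((Nat.factorial k : ℝ) * Real.Gamma ((k : ℝ) + ν + 1)) := by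
  have h1 : (0:ℝ) < (Nat.factorial k : ℝ) * Real.Gamma ((k : ℝ) + ν + 1) := by
    have := gamma_arg_pos hν k
    have h2 : (0:ℝ) < (Nat.factorial k : ℝ) := Nat.cast_pos.mpr (Nat.factorial_pos k)
    positivity
  rw [bc, abs_div, abs_pow, abs_neg, abs_one, one_pow, abs_of_pos h1]

lemma gamma_succ_arg {ν : ℝ} (hν : 0 ≤ ν) (k : ℕ) :
    Real.Gamma ((↑(k+1) : ℝ) + ν + 1) = ((k:ℝ) + ν + 1) * Real.Gamma ((k:ℝ) + ν + 1) := by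
  have h : ((↑(k+1) : ℝ) + ν + 1) = ((k:ℝ) + ν + 1) + 1 := by push_cast; ring
  rw [h, Real.Gamma_add_one]
  have := Nat.cast_nonneg (α := ℝ) k
  intro hc; nlinarith

lemma bc_summable {ν : ℝ} (hν : 0 ≤ ν) {R : ℝ} (hR : 0 < R) :
    Summable fun k => |bc ν k| * R ^ k := by
  apply summable_of_ratio_norm_eventually_le (r := 1/2) (by norm_num)
  filter_upwards [eventually_ge_atTop (⌈2 * R⌉₊)] with k hk
  have hkR : 2 * R ≤ (k : ℝ) := by
    calc 2 * R ≤ (⌈2*R⌉₊ : ℝ) := Nat.le_ceil _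
      _ ≤ (k : ℝ) := Nat.cast_le.mpr hk
  have hkn : (0:ℝ) ≤ (k:ℝ) := Nat.cast_nonneg k
  have hfac : (0:ℝ) < (Nat.factorial k : ℝ) := Nat.cast_pos.mpr (Nat.factorial_pos k)
  have hg := gamma_arg_pos hν k
  have hterm : ∀ j, ‖|bc ν j| * R ^ j‖ = |bc ν j| * R ^ j := fun j =>
    Real.norm_of_nonneg (by positivity)
  rw [hterm, hterm]
  rw [bc_abs hν, bc_abs hν, gamma_succ_arg hν]
  have hfs : ((Nat.factorial (k+1) : ℝ)) = ((k:ℝ)+1) * (Nat.factorial k : ℝ) := by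
    push_cast [Nat.factorial_succ]; ring
  rw [hfs, pow_succ]
  have key : R / (((k:ℝ)+1) * ((k:ℝ) + ν + 1)) ≤ 1/2 := by
    have h1 : (1:ℝ) ≤ (k:ℝ) + ν + 1 := by linarith
    have h2 : 2 * R ≤ ((k:ℝ)+1) * ((k:ℝ) + ν + 1) := by nlinarith
    rw [div_le_div_iff₀ (by nlinarith) (by norm_num)]
    nlinarith
  have expand : 1 / (((k:ℝ)+1) * (Nat.factorial k : ℝ) * (((k:ℝ) + ν + 1) * Real.Gamma ((k:ℝ) + ν + 1))) * (R ^ k * R)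
      = (R / (((k:ℝ)+1) * ((k:ℝ) + ν + 1))) * (1 / ((Nat.factorial k : ℝ) * Real.Gamma ((k:ℝ) + ν + 1)) * R ^ k) := by
    field_simp
  rw [expand]
  have hpos : (0:ℝ) ≤ 1 / ((Nat.factorial k : ℝ) * Real.Gamma ((k:ℝ) + ν + 1)) * R ^ k := by positivity
  calc (R / (((k:ℝ)+1) * ((k:ℝ) + ν + 1))) * (1 / ((Nat.factorial k : ℝ) * Real.Gamma ((k:ℝ) + ν + 1)) * R ^ k)
      ≤ (1/2) * (1 / ((Nat.factorial k : ℝ) * Real.Gamma ((k:ℝ) + ν + 1)) * R ^ k) :=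
        mul_le_mul_of_nonneg_right key hpos
    _ = _ := by ring

noncomputable def bF (ν : ℝ) (t : ℝ) : ℝ := ∑' k, bc ν k * t ^ k
lemma bc_succ {ν : ℝ} (hν : 0 ≤ ν) (k : ℕ) :
    ((k:ℝ) + 1) * bc ν (k + 1) = - bc (ν + 1) k := by
  have hg := gamma_arg_pos hν k
  have hkn : (0:ℝ) ≤ (k:ℝ) := Nat.cast_nonneg k
  have hgs : Real.Gamma ((↑(k+1) : ℝ) + ν + 1) = ((k:ℝ) + ν + 1) * Real.Gamma ((k:ℝ) + ν + 1) := by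
    have h : ((↑(k+1) : ℝ) + ν + 1) = ((k:ℝ) + ν + 1) + 1 := by push_cast; ring
    rw [h, Real.Gamma_add_one (by intro hc; nlinarith)]
  have harg : ((k:ℝ) + (ν+1) + 1) = ((k:ℝ) + ν + 1) + 1 := by ring
  have hgs2 : Real.Gamma ((k:ℝ) + (ν+1) + 1) = ((k:ℝ) + ν + 1) * Real.Gamma ((k:ℝ) + ν + 1) := by
    rw [harg, Real.Gamma_add_one (by intro hc; nlinarith)]
  rw [bc, bc, hgs, hgs2]
  have hfs : ((Nat.factorial (k+1) : ℝ)) = ((k:ℝ)+1) * (Nat.factorial k : ℝ) := by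
    push_cast [Nat.factorial_succ]; ring
  rw [hfs, pow_succ]
  have hfac : (0:ℝ) < (Nat.factorial k : ℝ) := Nat.cast_pos.mpr (Nat.factorial_pos k)
  field_simp

lemma bF_summable {ν : ℝ} (hν : 0 ≤ ν) (t : ℝ) : Summable fun k => bc ν k * t ^ k :=
  summable_pow_of_abs (fun _ hR => bc_summable hν hR) t

lemma bF_zero {ν : ℝ} (hν : 0 ≤ ν) : bF ν 0 = 1 / Real.Gamma (ν + 1) := by
  rw [bF, tsum_eq_single 0 (fun k hk => by
    rcases Nat.exists_eq_succ_of_ne_zero hk with ⟨j, rfl⟩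
    simp [zero_pow])]
  simp [bc]

lemma bF_hasDerivAt {ν : ℝ} (hν : 0 ≤ ν) (t : ℝ) :
    HasDerivAt (bF ν) (- bF (ν + 1) t) t := by
  have h := hasDerivAt_tsum_pow (fun _ hR => bc_summable hν hR) t
  have hsum : Summable fun k => bc ν k * ((k:ℝ) * t ^ (k - 1)) := by
    rw [← summable_nat_add_iff 1]
    have : (fun k => bc ν (k+1) * ((↑(k+1):ℝ) * t ^ (k+1-1))) = fun k => (- bc (ν+1) k) * t ^ k := by
      funext k
      have h3 := bc_succ hν k
      push_cast
      linear_combination t ^ k * h3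
    rw [show (fun k => bc ν (k+1) * ((↑(k+1):ℝ) * t ^ (k+1-1))) = fun k => (- bc (ν+1) k) * t ^ k from this]
    exact ((bF_summable (ν := ν + 1) (by linarith) t).neg).congr (fun k => by ring)
  have heq : (∑' k, bc ν k * ((k:ℝ) * t ^ (k - 1))) = - bF (ν + 1) t := by
    rw [hsum.tsum_eq_zero_add]
    simp only [Nat.cast_zero, zero_mul, mul_zero, zero_add]
    rw [bF, ← tsum_neg]
    apply tsum_congr
    intro k
    have h3 := bc_succ hν k
    have h2 : t ^ (k + 1 - 1) = t ^ k := by norm_num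
    push_cast [h2]
    linear_combination t ^ k * h3
  rw [← heq]
  exact h

lemma bF_rec {ν : ℝ} (hν : 0 ≤ ν) (t : ℝ) :
    bF ν t = (ν + 1) * bF (ν + 1) t - t * bF (ν + 2) t := by
  have hs0 : Summable fun k => bc ν k * t ^ k := bF_summable hν t
  have hs1 : Summable fun k => bc (ν+1) k * t ^ k := bF_summable (by linarith) t
  have hs2 : Summable fun k => bc (ν+2) k * t ^ k := bF_summable (by linarith) t
  have hD : bF ν t - (ν + 1) * bF (ν + 1) t = ∑' k, (bc ν k - (ν+1) * bc (ν+1) k) * t ^ k := by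
    rw [bF, bF, ← tsum_mul_left]
    rw [← hs0.tsum_sub (hs1.mul_left _)]
    apply tsum_congr; intro k; ring
  have hd0 : (bc ν 0 - (ν+1) * bc (ν+1) 0) = 0 := by
    have hg := gamma_arg_pos hν 0
    have hg1 : (0:ℝ) < Real.Gamma (ν + 1) := by
      have := gamma_arg_pos hν 0
      simpa using this
    have h1 : Real.Gamma ((↑(0:ℕ):ℝ) + (ν+1) + 1) = (ν+1) * Real.Gamma (ν + 1) := by
      rw [show ((↑(0:ℕ):ℝ) + (ν+1) + 1) = (ν+1) + 1 by push_cast; ring,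
        Real.Gamma_add_one (by linarith)]
    have h2 : ((↑(0:ℕ):ℝ) + ν + 1) = ν + 1 := by push_cast; ring
    simp only [bc, Nat.factorial_zero, Nat.cast_one, pow_zero, one_mul]
    rw [h1, h2]
    have hne : Real.Gamma (ν+1) ≠ 0 := ne_of_gt hg1
    field_simp
    ring
  have hdsucc : ∀ k : ℕ, (bc ν (k+1) - (ν+1) * bc (ν+1) (k+1)) = - bc (ν+2) k := by
    intro k
    have hg := gamma_arg_pos hν k
    have hkn : (0:ℝ) ≤ (k:ℝ) := Nat.cast_nonneg k
    have e1 : ((↑(k+1):ℝ) + ν + 1) = ((k:ℝ) + ν + 1) + 1 := by push_cast; ring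
    have e2 : ((↑(k+1):ℝ) + (ν+1) + 1) = (((k:ℝ) + ν + 1) + 1) + 1 := by push_cast; ring
    have e3 : ((k:ℝ) + (ν+2) + 1) = (((k:ℝ) + ν + 1) + 1) + 1 := by ring
    have g1 : Real.Gamma (((k:ℝ) + ν + 1) + 1) = ((k:ℝ)+ν+1) * Real.Gamma ((k:ℝ)+ν+1) :=
      Real.Gamma_add_one (by intro hc; nlinarith)
    have g2 : Real.Gamma ((((k:ℝ) + ν + 1) + 1) + 1) = (((k:ℝ)+ν+1)+1) * (((k:ℝ)+ν+1) * Real.Gamma ((k:ℝ)+ν+1)) := by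
      rw [Real.Gamma_add_one (by intro hc; nlinarith), g1]
    rw [bc, bc, bc, e1, e2, e3, g1, g2]
    have hfs : ((Nat.factorial (k+1) : ℝ)) = ((k:ℝ)+1) * (Nat.factorial k : ℝ) := by
      push_cast [Nat.factorial_succ]; ring
    rw [hfs, pow_succ]
    have hfac : (0:ℝ) < (Nat.factorial k : ℝ) := Nat.cast_pos.mpr (Nat.factorial_pos k)
    field_simp
    ring
  have hsd : Summable fun k => (bc ν k - (ν+1) * bc (ν+1) k) * t ^ k := by
    refine Summable.congr (hs0.sub (hs1.mul_left (ν+1))) ?_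
    intro k; ring
  have hRHS : (∑' k, (bc ν k - (ν+1) * bc (ν+1) k) * t ^ k) = - t * bF (ν + 2) t := by
    rw [hsd.tsum_eq_zero_add, hd0]
    simp only [zero_mul, zero_add]
    have hterm : ∀ k : ℕ, (bc ν (k+1) - (ν+1) * bc (ν+1) (k+1)) * t ^ (k+1)
        = -t * (bc (ν+2) k * t ^ k) := by
      intro k
      rw [hdsucc k]
      ring
    rw [tsum_congr hterm, tsum_mul_left, bF]
  rw [hRHS] at hD
  linarith

lemma bessel_key {ν : ℝ} (hν : 3/2 ≤ ν) {u : ℝ} (hu : 0 < u) (huT : u ≤ (2*ν-1)/4) :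
    u * bF (ν + 1) (u^2) < bF ν (u^2) := by
  have hν0 : (0:ℝ) ≤ ν := by linarith
  have hν1 : (0:ℝ) ≤ ν + 1 := by linarith
  set T : ℝ := (2*ν-1)/4 with hT
  set P : ℝ → ℝ := fun x => bF ν (x^2) with hPdef
  set Q : ℝ → ℝ := fun x => bF (ν+1) (x^2) with hQdef
  set S : ℝ → ℝ := fun x => bF (ν+2) (x^2) with hSdef
  have hsq : ∀ x : ℝ, HasDerivAt (fun y : ℝ => y^2) (2*x) x := by
    intro x; simpa using hasDerivAt_pow 2 x
  have hP : ∀ x : ℝ, HasDerivAt P (-(2*x) * Q x) x := by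
    intro x
    have := (bF_hasDerivAt hν0 (x^2)).comp x (hsq x)
    simpa [hPdef, hQdef, Function.comp_def] using this.congr_deriv (by ring)
  have hQ : ∀ x : ℝ, HasDerivAt Q (-(2*x) * S x) x := by
    intro x
    have := (bF_hasDerivAt hν1 (x^2)).comp x (hsq x)
    have h2 : ν + 1 + 1 = ν + 2 := by ring
    rw [h2] at this
    simpa [hQdef, hSdef, Function.comp_def] using this.congr_deriv (by ring)
  set h : ℝ → ℝ := fun x => P x - x * Q x with hhdef
  have hh : ∀ x : ℝ, HasDerivAt h (-(2*x) * Q x - (Q x + x * (-(2*x) * S x))) x := by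
    intro x
    exact (hP x).sub (((hasDerivAt_id x).mul (hQ x)).congr_deriv (by simp only [id_eq]; ring))
  have hcont : Continuous h := by
    have : Differentiable ℝ h := fun x => (hh x).differentiableAt
    exact this.continuous
  have hP0 : P 0 = 1 / Real.Gamma (ν + 1) := by
    simp only [hPdef]; norm_num [bF_zero hν0]
  have hG : 0 < Real.Gamma (ν + 1) := by simpa using gamma_arg_pos hν0 0
  have hP0pos : 0 < P 0 := by rw [hP0]; positivity
  have h0pos : 0 < h 0 := by simp only [hhdef]; simpa using hP0pos
  -- contradiction setup
  by_contra hcon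
  push_neg at hcon
  have hneg : h u ≤ 0 := by simp only [hhdef]; linarith
  set E : Set ℝ := {x | x ∈ Icc (0:ℝ) T ∧ h x ≤ 0} with hEdef
  have hEne : E.Nonempty := ⟨u, ⟨⟨hu.le, huT⟩, hneg⟩⟩
  have hEclosed : IsClosed E := by
    have : E = Icc (0:ℝ) T ∩ {x | h x ≤ 0} := rfl
    rw [this]
    exact isClosed_Icc.inter (isClosed_le hcont continuous_const)
  have hEbdd : BddBelow E := ⟨0, fun x hx => hx.1.1⟩
  set u₀ : ℝ := sInf E with hu₀def
  have hu₀E : u₀ ∈ E := hEclosed.csInf_mem hEne hEbdd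
  have hu₀pos : 0 < u₀ := by
    rcases lt_or_eq_of_le hu₀E.1.1 with h1 | h1
    · exact h1
    · exfalso; rw [← h1] at hu₀E; linarith [hu₀E.2]
  have hu₀T : u₀ ≤ T := hu₀E.1.2
  have hlt : ∀ x, 0 ≤ x → x < u₀ → 0 < h x := by
    intro x hx0 hxu
    by_contra hc
    push_neg at hc
    have : x ∈ E := ⟨⟨hx0, le_trans hxu.le hu₀T⟩, hc⟩
    exact absurd (csInf_le hEbdd this) (not_le.mpr hxu)
  have hh0 : h u₀ = 0 := by
    refine le_antisymm hu₀E.2 ?_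
    have htend : Tendsto h (𝓝[<] u₀) (𝓝 (h u₀)) :=
      (hcont.continuousAt.tendsto).mono_left nhdsWithin_le_nhds
    refine ge_of_tendsto htend ?_
    have hmem : Ioo 0 u₀ ∈ 𝓝[<] u₀ := Ioo_mem_nhdsLT_of_mem ⟨hu₀pos, le_refl u₀⟩
    filter_upwards [hmem] with x hx
    exact (hlt x hx.1.le hx.2).le
  -- Gronwall: P u₀ > 0
  have hW : ∀ x : ℝ, HasDerivAt (fun y => Real.exp (2*y) * P y) (2 * Real.exp (2*x) * h x) x := by
    intro x
    have he : HasDerivAt (fun y : ℝ => Real.exp (2*y)) (2 * Real.exp (2*x)) x := by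
      simpa [mul_comm] using (((hasDerivAt_id x).const_mul (2:ℝ)).exp)
    have := he.mul (hP x)
    refine this.congr_deriv ?_
    simp only [hhdef]; ring
  have hWmono : MonotoneOn (fun y => Real.exp (2*y) * P y) (Icc 0 u₀) := by
    apply monotoneOn_of_deriv_nonneg (convex_Icc 0 u₀)
    · exact (Differentiable.continuous (fun x => (hW x).differentiableAt)).continuousOn
    · intro x _
      exact (hW x).differentiableAt.differentiableWithinAt
    · intro x hx
      rw [interior_Icc] at hx
      rw [(hW x).deriv]
      have := hlt x hx.1.le hx.2
      positivity
  have hPu₀pos : 0 < P u₀ := by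
    have h1 : Real.exp (2*0) * P 0 ≤ Real.exp (2*u₀) * P u₀ :=
      hWmono ⟨le_refl 0, hu₀pos.le⟩ ⟨hu₀pos.le, le_refl u₀⟩ hu₀pos.le
    have h2 : 0 < Real.exp (2*0) * P 0 := by positivity
    nlinarith [Real.exp_pos (2*u₀)]
  have hQu₀pos : 0 < Q u₀ := by
    have hPQ : P u₀ = u₀ * Q u₀ := by
      have := hh0; simp only [hhdef] at this; linarith
    nlinarith
  -- recurrence at u₀²
  have hrec : P u₀ = (ν + 1) * Q u₀ - u₀^2 * S u₀ := bF_rec hν0 (u₀^2)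
  have hPQ : P u₀ = u₀ * Q u₀ := by
    have := hh0; simp only [hhdef] at this; linarith
  have hS : u₀^2 * S u₀ = (ν + 1 - u₀) * Q u₀ := by linarith [hrec, hPQ]
  -- derivative of h at u₀ is positive
  have hdval : -(2*u₀) * Q u₀ - (Q u₀ + u₀ * (-(2*u₀) * S u₀)) = (2*ν + 1 - 4*u₀) * Q u₀ := by
    have : u₀ * (-(2*u₀) * S u₀) = -2 * (u₀^2 * S u₀) := by ring
    rw [this, hS]; ring
  have hdpos : 0 < -(2*u₀) * Q u₀ - (Q u₀ + u₀ * (-(2*u₀) * S u₀)) := by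
    rw [hdval]
    have : 2*ν + 1 - 4*u₀ ≥ 2 := by
      rw [hT] at hu₀T; linarith
    nlinarith
  -- but derivative at first zero from the left is ≤ 0
  have hdle : -(2*u₀) * Q u₀ - (Q u₀ + u₀ * (-(2*u₀) * S u₀)) ≤ 0 := by
    have hslope := hasDerivAt_iff_tendsto_slope.mp (hh u₀)
    have hslope' : Tendsto (slope h u₀) (𝓝[<] u₀)
        (𝓝 (-(2*u₀) * Q u₀ - (Q u₀ + u₀ * (-(2*u₀) * S u₀)))) :=
      hslope.mono_left (nhdsWithin_mono _ (fun x hx => ne_of_lt hx))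
    refine le_of_tendsto hslope' ?_
    have hmem : Ioo 0 u₀ ∈ 𝓝[<] u₀ := Ioo_mem_nhdsLT_of_mem ⟨hu₀pos, le_refl u₀⟩
    filter_upwards [hmem] with x hx
    have h1 : 0 < h x := hlt x hx.1.le hx.2
    have h2 : slope h u₀ x = (h x - h u₀) / (x - u₀) := by
      rw [slope_def_field]
    rw [h2, hh0, sub_zero]
    apply div_nonpos_of_nonneg_of_nonpos h1.le
    linarith [hx.2]
  linarith

end BesselAux

/-- Bessel function of the first kind, defined by its power series. -/
noncomputable def besselJ (α : ℝ) (x : ℝ) : ℝ :=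
  ∑' k : ℕ,
    ((-1 : ℝ) ^ k / ((Nat.factorial k : ℝ) * Real.Gamma ((k : ℝ) + α + 1))) *
      (x / 2) ^ (2 * (k : ℝ) + α)

lemma besselJ_eq_bF (α : ℝ) {x : ℝ} (hx : 0 < x) :
    besselJ α x = (x/2) ^ α * bF α ((x/2)^2) := by
  have h2 : (0:ℝ) < x/2 := by linarith
  rw [besselJ, bF, ← tsum_mul_left]
  apply tsum_congr
  intro k
  have hsplit : (x/2) ^ (2 * (k:ℝ) + α) = (x/2) ^ (2*(k:ℝ)) * (x/2) ^ α :=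
    Real.rpow_add h2 _ _
  have hnat : (x/2) ^ (2*(k:ℝ)) = ((x/2)^2) ^ k := by
    rw [show 2*(k:ℝ) = ((2*k : ℕ) : ℝ) by push_cast; ring, Real.rpow_natCast, pow_mul]
  rw [hsplit, hnat, bc]
  ring

theorem besselJ_gt (m : ℕ) (hm : 1 ≤ m) (r : ℝ) (hr : 0 < r) (hrm : r ≤ (m : ℝ)) :
    besselJ ((m : ℝ) + 1 / 2) r > besselJ ((m : ℝ) + 3 / 2) r := by
  set ν : ℝ := (m:ℝ) + 1/2 with hν
  have hm1 : (1:ℝ) ≤ (m:ℝ) := by exact_mod_cast hm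
  have hν32 : 3/2 ≤ ν := by rw [hν]; linarith
  have hu : 0 < r/2 := by linarith
  have huT : r/2 ≤ (2*ν-1)/4 := by rw [hν]; linarith
  have h31 : (m:ℝ) + 3/2 = ν + 1 := by rw [hν]; ring
  rw [h31, besselJ_eq_bF ν hr, besselJ_eq_bF (ν+1) hr]
  have hkey := bessel_key hν32 hu huT
  have hpow : (r/2) ^ (ν+1) = (r/2) ^ ν * (r/2) := by
    rw [Real.rpow_add hu, Real.rpow_one]
  rw [hpow]
  have hrp : 0 < (r/2) ^ ν := Real.rpow_pos_of_pos hu ν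
  calc (r/2) ^ ν * (r/2) * bF (ν+1) ((r/2)^2)
      = (r/2) ^ ν * ((r/2) * bF (ν+1) ((r/2)^2)) := by ring
    _ < (r/2) ^ ν * bF ν ((r/2)^2) := by
        exact mul_lt_mul_of_pos_left hkey hrp
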